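/- Let k be a separably closed field of characteristic different from 2, let n ≥ 1, and let A, B be symmetric n×n matrices over k with A invertible such that the characteristic polynomial of A⁻¹B is separable. Then there exist an invertible matrix P over k and pairwise distinct scalars λ₀, …, λ_{n−1} ∈ k such that Pᵀ·A·P is the identity matrix and Pᵀ·B·P is the diagonal matrix with entries λ₀, …, λ_{n−1}. -/

import Mathlib

open Matrix Polynomial

lemma eval_charpoly_aux {k : Type*} [Field k] {n : ℕ} (M : Matrix (Fin n) (Fin n) k) (μ : k) :
    (M.charpoly).eval μ = (μ • (1 : Matrix (Fin n) (Fin n) k) - M).det := by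
  rw [Matrix.charpoly, ← Polynomial.coe_evalRingHom, RingHom.map_det]
  congr 1
  ext i j
  by_cases h : i = j <;>
    simp [charmatrix_apply, Matrix.diagonal_apply, Matrix.one_apply, h]

/-- Let `k` be a separably closed field of characteristic different from 2,
`n ≥ 1`, and `A, B` symmetric `n × n` matrices over `k` with `A` invertible such that the
characteristic polynomial of `A⁻¹ * B` is separable. Then there is an invertible matrix `P`
and pairwise distinct scalars `λ₀, …, λ_{n-1}` with `Pᵀ * A * P = 1` and
`Pᵀ * B * P = diagonal λ`. -/
theorem stmt_0 (k : Type*) [Field k] [IsSepClosed k] (hchar : ringChar k ≠ 2)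
    (n : ℕ) (hn : 1 ≤ n) (A B : Matrix (Fin n) (Fin n) k)
    (hA : A.IsSymm) (hB : B.IsSymm) (hAinv : IsUnit A.det)
    (hsep : (Matrix.charpoly (A⁻¹ * B)).Separable) :
    ∃ P : Matrix (Fin n) (Fin n) k, IsUnit P.det ∧
      ∃ lam : Fin n → k, Function.Injective lam ∧
        Pᵀ * A * P = 1 ∧ Pᵀ * B * P = Matrix.diagonal lam := by
  classical
  have h2 : (2 : k) ≠ 0 := Ring.two_ne_zero hchar
  set M : Matrix (Fin n) (Fin n) k := A⁻¹ * B with hMdef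
  have hBM : B = A * M := by
    rw [hMdef, ← Matrix.mul_assoc, Matrix.mul_nonsing_inv A hAinv, Matrix.one_mul]
  have hMT : Mᵀ * A = A * M := by
    have : Mᵀ = B * A⁻¹ := by
      rw [hMdef, Matrix.transpose_mul, Matrix.transpose_nonsing_inv, hA.eq, hB.eq]
    rw [this, Matrix.mul_assoc, Matrix.nonsing_inv_mul A hAinv, Matrix.mul_one, hBM]
  -- roots of charpoly
  have hdeg : M.charpoly.natDegree = n := by
    simpa using M.charpoly_natDegree_eq_dim
  have hsplits : M.charpoly.Splits :=
    IsSepClosed.splits_of_separable _ hsep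
  have hcard : M.charpoly.roots.card = n := by
    rw [(Polynomial.splits_iff_card_roots).1 hsplits, hdeg]
  have hnodup : M.charpoly.roots.Nodup := Polynomial.nodup_roots hsep
  have hcardF : M.charpoly.roots.toFinset.card = n := by
    rw [Multiset.toFinset_card_of_nodup hnodup, hcard]
  let e : Fin n ≃ M.charpoly.roots.toFinset :=
    (Fintype.equivFinOfCardEq (by simpa using hcardF)).symm
  set lam : Fin n → k := fun i => (e i : k) with hlamdef
  have hlaminj : Function.Injective lam := by
    intro i j hij
    exact e.injective (Subtype.ext hij)
  have hlamroot : ∀ i, M.charpoly.IsRoot (lam i) := fun i => by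
    have : lam i ∈ M.charpoly.roots := Multiset.mem_toFinset.1 (e i).2
    exact isRoot_of_mem_roots this
  -- eigenvectors
  have hev : ∀ i : Fin n, ∃ v : Fin n → k, v ≠ 0 ∧ M *ᵥ v = lam i • v := by
    intro i
    have hdet : (lam i • (1 : Matrix (Fin n) (Fin n) k) - M).det = 0 := by
      rw [← eval_charpoly_aux]; exact hlamroot i
    obtain ⟨v, hv0, hv⟩ := (Matrix.exists_mulVec_eq_zero_iff).2 hdet
    refine ⟨v, hv0, ?_⟩
    have := hv
    rw [Matrix.sub_mulVec, sub_eq_zero] at this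
    rw [← this, Matrix.smul_mulVec, Matrix.one_mulVec]
  choose v hv0 hv using hev
  set Q : Matrix (Fin n) (Fin n) k := Matrix.of fun r i => v i r with hQdef
  have hQcol : ∀ i, Qᵀ i = v i := fun i => rfl
  -- Q is invertible
  have hQunit : IsUnit Q := by
    rw [← Matrix.linearIndependent_cols_iff_isUnit]
    have := Module.End.eigenvectors_linearIndependent' (M.mulVecLin) lam hlaminj v
      (fun i => ⟨Module.End.mem_eigenspace_iff.2 (by simpa using hv i), hv0 i⟩)
    exact this
  have hQdet : IsUnit Q.det := (Matrix.isUnit_iff_isUnit_det Q).1 hQunit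
  have hMQ : M * Q = Q * Matrix.diagonal lam := by
    ext r i
    have h := congrFun (hv i) r
    simp only [Matrix.mulVec, dotProduct, Pi.smul_apply, smul_eq_mul] at h
    rw [Matrix.mul_apply, Matrix.mul_diagonal]
    simp only [hQdef, Matrix.of_apply]
    rw [h, mul_comm]
  set G : Matrix (Fin n) (Fin n) k := Qᵀ * A * Q with hGdef
  have hcomm : G * Matrix.diagonal lam = Matrix.diagonal lam * G := by
    calc G * Matrix.diagonal lam
        = Qᵀ * (A * (Q * Matrix.diagonal lam)) := by simp only [hGdef, Matrix.mul_assoc]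
      _ = Qᵀ * (A * (M * Q)) := by rw [← hMQ]
      _ = Qᵀ * (Mᵀ * (A * Q)) := by rw [← Matrix.mul_assoc A M, ← hMT, Matrix.mul_assoc]
      _ = (M * Q)ᵀ * A * Q := by simp only [Matrix.transpose_mul, Matrix.mul_assoc]
      _ = (Q * Matrix.diagonal lam)ᵀ * A * Q := by rw [hMQ]
      _ = Matrix.diagonal lam * G := by
          simp only [Matrix.transpose_mul, Matrix.diagonal_transpose, hGdef, Matrix.mul_assoc]
  have hGoff : ∀ i j, i ≠ j → G i j = 0 := by
    intro i j hij
    have h := congrFun (congrFun hcomm i) j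
    rw [Matrix.mul_diagonal, Matrix.diagonal_mul] at h
    have hlamne : lam i ≠ lam j := fun hc => hij (hlaminj hc)
    have : G i j * (lam j - lam i) = 0 := by linear_combination h
    rcases mul_eq_zero.1 this with h' | h'
    · exact h'
    · exact absurd (sub_eq_zero.1 h').symm hlamne
  set d : Fin n → k := fun i => G i i with hddef
  have hGdiag : G = Matrix.diagonal d := by
    ext i j
    by_cases h : i = j
    · subst h; simp [Matrix.diagonal_apply, hddef]
    · simp [Matrix.diagonal_apply, h, hGoff i j h]
  have hGdet : IsUnit G.det := by
    rw [hGdef, Matrix.det_mul, Matrix.det_mul, Matrix.det_transpose]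
    exact (hQdet.mul hAinv).mul hQdet
  have hdne : ∀ i, d i ≠ 0 := by
    intro i hdi
    rw [hGdiag, Matrix.det_diagonal] at hGdet
    exact (Finset.prod_eq_zero (Finset.mem_univ i) hdi ▸ hGdet).ne_zero rfl
  -- square roots
  have hs : ∀ i : Fin n, ∃ s : k, s ≠ 0 ∧ s ^ 2 = (d i)⁻¹ := by
    intro i
    have hc : (d i)⁻¹ ≠ 0 := inv_ne_zero (hdne i)
    obtain ⟨s, hsroot⟩ := IsSepClosed.exists_root (X ^ 2 - C (d i)⁻¹)
      (by rw [Polynomial.degree_X_pow_sub_C (by norm_num)]; norm_num)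
      (Polynomial.separable_X_pow_sub_C _ (by exact_mod_cast h2) hc)
    have hs2 : s ^ 2 = (d i)⁻¹ := by
      have := hsroot
      simp only [Polynomial.IsRoot, Polynomial.eval_sub, Polynomial.eval_pow,
        Polynomial.eval_X, Polynomial.eval_C, sub_eq_zero] at this
      exact this
    exact ⟨s, fun h0 => hc (by rw [← hs2, h0]; ring), hs2⟩
  choose s hs0 hs2 using hs
  refine ⟨Q * Matrix.diagonal s, ?_, lam, hlaminj, ?_, ?_⟩
  · rw [Matrix.det_mul, Matrix.det_diagonal]
    exact hQdet.mul (IsUnit.mk0 _ (Finset.prod_ne_zero_iff.2 fun i _ => hs0 i))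
  · rw [Matrix.transpose_mul, Matrix.diagonal_transpose]
    calc Matrix.diagonal s * Qᵀ * A * (Q * Matrix.diagonal s)
        = Matrix.diagonal s * (G * Matrix.diagonal s) := by
          simp only [hGdef, Matrix.mul_assoc]
      _ = 1 := by
          rw [hGdiag, Matrix.diagonal_mul_diagonal, Matrix.diagonal_mul_diagonal,
            ← Matrix.diagonal_one]
          have hfun : (fun i => s i * (d i * s i)) = fun _ : Fin n => (1 : k) := by
            funext i
            calc s i * (d i * s i) = s i ^ 2 * d i := by ring
              _ = 1 := by rw [hs2 i, inv_mul_cancel₀ (hdne i)]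
          rw [hfun]
  · rw [Matrix.transpose_mul, Matrix.diagonal_transpose, hBM]
    calc Matrix.diagonal s * Qᵀ * (A * M) * (Q * Matrix.diagonal s)
        = Matrix.diagonal s * (Qᵀ * (A * (M * (Q * Matrix.diagonal s)))) := by
          simp only [Matrix.mul_assoc]
      _ = Matrix.diagonal s * (Qᵀ * (A * (Q * (Matrix.diagonal lam * Matrix.diagonal s)))) := by
          rw [← Matrix.mul_assoc M Q, hMQ, Matrix.mul_assoc]
      _ = Matrix.diagonal s * (G * (Matrix.diagonal lam * Matrix.diagonal s)) := by
          simp only [hGdef, Matrix.mul_assoc]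
      _ = Matrix.diagonal lam := by
          rw [hGdiag, Matrix.diagonal_mul_diagonal, Matrix.diagonal_mul_diagonal,
            Matrix.diagonal_mul_diagonal]
          have hfun : (fun i => s i * (d i * (lam i * s i))) = lam := by
            funext i
            calc s i * (d i * (lam i * s i)) = s i ^ 2 * d i * lam i := by ring
              _ = lam i := by rw [hs2 i, inv_mul_cancel₀ (hdne i), one_mul]
          rw [hfun]
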